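/- Converse universal factorization: let ν : V_1 × ... × V_m → P be multilinear with span(Im ν) = P, and suppose every multilinear form φ : V_1 × ... × V_m → F factors as φ = h_φ ∘ ν for some linear h_φ : P → F. Then dim P = ∏_{i=1}^m dim V_i, i.e., (P, ν) is a tensor product of the V_i. -/

import Mathlib

/-- Converse universal factorization: if the image of `ν` spans `P` and every
multilinear form factors through `ν`, then `dim P = ∏ dim Vᵢ`. -/
theorem stmt_8 {F : Type*} [Field F] {m : ℕ} {V : Fin m → Type*} {P : Type*}
    [∀ i, AddCommGroup (V i)] [∀ i, Module F (V i)] [AddCommGroup P] [Module F P]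
    [∀ i, FiniteDimensional F (V i)]
    (ν : MultilinearMap F V P)
    (hspan : Submodule.span F (Set.range fun x : (i : Fin m) → V i => ν x) = ⊤)
    (hUF : ∀ φ : MultilinearMap F V F, ∃ h : P →ₗ[F] F,
      ∀ x : (i : Fin m) → V i, φ x = h (ν x)) :
    Module.finrank F P = ∏ i : Fin m, Module.finrank F (V i) := by
  classical
  set e : ∀ i, Module.Basis (Fin (Module.finrank F (V i))) F (V i) :=
    fun i => Module.finBasis F (V i) with he
  set b : (∀ i, Fin (Module.finrank F (V i))) → P :=
    fun r => ν (fun i => e i (r i)) with hb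
  -- spanning
  have hspanb : Submodule.span F (Set.range b) = ⊤ := by
    rw [eq_top_iff, ← hspan, Submodule.span_le]
    rintro _ ⟨x, rfl⟩
    have hx : ν x = ∑ r : ∀ i, Fin (Module.finrank F (V i)),
        (∏ i, (e i).equivFun (x i) (r i)) • b r := by
      have h1 : ν x = ν (fun i => ∑ k, (e i).equivFun (x i) k • e i k) := by
        congr 1; funext i; rw [Module.Basis.sum_equivFun]
      rw [h1, ν.map_sum]
      refine Finset.sum_congr rfl (fun r _ => ?_)
      exact ν.map_smul_univ _ _
    show ν x ∈ _
    rw [hx]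
    exact Submodule.sum_mem _ fun r _ =>
      Submodule.smul_mem _ _ (Submodule.subset_span ⟨r, rfl⟩)
  -- linear independence via factored dual functionals
  have hli : LinearIndependent F b := by
    rw [Fintype.linearIndependent_iff]
    intro g hg r
    -- multilinear form: product of coordinates
    obtain ⟨h, hh⟩ := hUF ((MultilinearMap.mkPiAlgebra F (Fin m) F).compLinearMap
      (fun i => (e i).coord (r i)))
    have key : ∀ w, h (b w) = if r = w then 1 else 0 := by
      intro w
      rw [hb, ← hh]
      simp only [MultilinearMap.compLinearMap_apply, MultilinearMap.mkPiAlgebra_apply]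
      rw [show (∏ i, (e i).coord (r i) (e i (w i)))
          = ∏ i, if r i = w i then (1:F) else 0 by
        refine Finset.prod_congr rfl (fun i _ => ?_)
        rw [Module.Basis.coord_apply, Module.Basis.repr_self]
        simp [Finsupp.single_apply, eq_comm]]
      by_cases hrw : r = w
      · simp [hrw]
      · obtain ⟨i, hi⟩ := Function.ne_iff.mp hrw
        rw [if_neg hrw]
        exact Finset.prod_eq_zero (Finset.mem_univ i) (if_neg hi)
    have := congrArg h hg
    rw [map_sum, map_zero] at this
    simp only [map_smul, key, smul_eq_mul, mul_ite, mul_one, mul_zero] at this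
    rw [Finset.sum_ite_eq (Finset.univ) r g] at this
    simpa using this
  -- conclude
  let B : Module.Basis (∀ i, Fin (Module.finrank F (V i))) F P := Module.Basis.mk hli (by rw [hspanb])
  rw [Module.finrank_eq_card_basis B, Fintype.card_pi]
  simp
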